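/- Fix a real number t > 0 and an integer 0 ≤ ℓ ≤ n−1, and let Θ : {z ∈ ℂ^n : q(z) = t} → {(u,v) ∈ ℝ^n × ℝ^n : ‖u‖ = 1, ⟨u,v⟩ = 0} be the map Θ(z) = (Re z / ‖Re z‖, Im z), a homeomorphism onto the tangent bundle of the (n−1)-sphere. Then Θ carries the intersection Q_ℓ ∩ {z : q(z) = t} bijectively onto the set {(u,v) : ‖u‖ = 1, u_j = 0 for all j ≤ ℓ, and v_j = 0 for all j > ℓ}, i.e. onto the conormal bundle of the equatorial subsphere S^{n−ℓ−1} = S^{n−1} ∩ {u_1 = ⋯ = u_ℓ = 0} inside the sphere. In particular, the intersection of the model Lagrangian ℓ-handle with a regular fiber of the model Lefschetz fibration is identified with a conormal bundle of a subsphere of the vanishing cycle. -/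

import Mathlib

open scoped BigOperators

noncomputable section

/-- The model Lefschetz singularity map `q(z) = Σ_j z_j²` on `ℂⁿ`. -/
def q (n : ℕ) (z : EuclideanSpace ℂ (Fin n)) : ℂ :=
  ∑ j : Fin n, (z j) ^ 2

/-- The componentwise real part of `z ∈ ℂⁿ`, a vector in `ℝⁿ`. -/
def reVec (n : ℕ) (z : EuclideanSpace ℂ (Fin n)) : EuclideanSpace ℝ (Fin n) :=
  WithLp.toLp 2 (fun j => (z j).re)

/-- The componentwise imaginary part of `z ∈ ℂⁿ`, a vector in `ℝⁿ`. -/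
def imVec (n : ℕ) (z : EuclideanSpace ℂ (Fin n)) : EuclideanSpace ℝ (Fin n) :=
  WithLp.toLp 2 (fun j => (z j).im)

/-- The model Lagrangian `ℓ`-handle `Q_ℓ ⊆ ℂⁿ`:
`Re z_j = 0` for `j ≤ ℓ` and `Im z_j = 0` for `j > ℓ` (in `1`-indexed notation). -/
def Qset (n l : ℕ) : Set (EuclideanSpace ℂ (Fin n)) :=
  {z | (∀ j : Fin n, (j : ℕ) < l → (z j).re = 0) ∧ (∀ j : Fin n, l ≤ (j : ℕ) → (z j).im = 0)}

lemma norm_sq_euc {n : ℕ} (x : EuclideanSpace ℝ (Fin n)) : ‖x‖ ^ 2 = ∑ j, (x j) ^ 2 := by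
  rw [EuclideanSpace.norm_eq, Real.sq_sqrt (Finset.sum_nonneg fun j _ => sq_nonneg _)]
  simp [Real.norm_eq_abs, sq_abs]

lemma key {n l : ℕ} {t : ℝ} {z : EuclideanSpace ℂ (Fin n)} (hz : z ∈ Qset n l)
    (hq : q n z = (t : ℂ)) : ‖reVec n z‖ ^ 2 = t + ‖imVec n z‖ ^ 2 := by
  have hre : (q n z).re = t := by rw [hq]; simp
  have : ∑ j, ((z j).re ^ 2 - (z j).im ^ 2) = t := by
    rw [← hre]
    simp [q, Complex.re_sum, pow_two, Complex.mul_re]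
  rw [norm_sq_euc, norm_sq_euc]
  simp only [reVec, imVec]
  rw [Finset.sum_sub_distrib] at this
  linarith [this]

/-- The map `Θ(z) = (Re z/‖Re z‖, Im z)` carries `Q_ℓ ∩ {q = t}` bijectively onto the
conormal bundle `{(u,v) : ‖u‖ = 1, u_j = 0 for j ≤ ℓ, v_j = 0 for j > ℓ}` of the
equatorial subsphere `S^{n−ℓ−1} ⊆ S^{n−1}`: the intersection of the model Lagrangian
`ℓ`-handle with a regular fiber is a conormal bundle of a subsphere of the vanishing
cycle. -/
theorem stmt_17 (n l : ℕ) (hn : 1 ≤ n) (hl : l ≤ n - 1) (t : ℝ) (ht : 0 < t) :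
    Set.BijOn
      (fun z : EuclideanSpace ℂ (Fin n) => ((‖reVec n z‖)⁻¹ • reVec n z, imVec n z))
      (Qset n l ∩ {z | q n z = (t : ℂ)})
      {w : EuclideanSpace ℝ (Fin n) × EuclideanSpace ℝ (Fin n) |
        ‖w.1‖ = 1 ∧ (∀ j : Fin n, (j : ℕ) < l → w.1 j = 0) ∧
        (∀ j : Fin n, l ≤ (j : ℕ) → w.2 j = 0)} := by
  have hrpos : ∀ z ∈ Qset n l ∩ {z | q n z = (t : ℂ)}, 0 < ‖reVec n z‖ := by
    rintro z ⟨hz, hq⟩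
    have hk := key hz hq
    nlinarith [norm_nonneg (reVec n z), norm_nonneg (imVec n z), sq_nonneg ‖imVec n z‖]
  refine ⟨?_, ?_, ?_⟩
  · -- MapsTo
    rintro z ⟨⟨h1, h2⟩, hq⟩
    have hp := hrpos z ⟨⟨h1, h2⟩, hq⟩
    refine ⟨?_, ?_, ?_⟩
    · rw [norm_smul, norm_inv, norm_norm, inv_mul_cancel₀ hp.ne']
    · intro j hj
      show (‖reVec n z‖)⁻¹ • reVec n z j = 0
      -- component of smul
      have : reVec n z j = 0 := h1 j hj
      simp [this]
    · intro j hj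
      exact h2 j hj
  · -- InjOn
    rintro z hz z' hz' heq
    obtain ⟨⟨h1, h2⟩, hq⟩ := hz
    obtain ⟨⟨h1', h2'⟩, hq'⟩ := hz'
    have hp := hrpos z ⟨⟨h1, h2⟩, hq⟩
    have hp' := hrpos z' ⟨⟨h1', h2'⟩, hq'⟩
    have him : imVec n z = imVec n z' := congrArg Prod.snd heq
    have hu : (‖reVec n z‖)⁻¹ • reVec n z = (‖reVec n z'‖)⁻¹ • reVec n z' :=
      congrArg Prod.fst heq
    have hnorm : ‖reVec n z‖ = ‖reVec n z'‖ := by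
      have h2sq : ‖reVec n z‖ ^ 2 = ‖reVec n z'‖ ^ 2 := by
        rw [key ⟨h1, h2⟩ hq, key ⟨h1', h2'⟩ hq', him]
      nlinarith
    have hre : reVec n z = reVec n z' := by
      have := congrArg (fun x => ‖reVec n z‖ • x) hu
      simp only [smul_smul, mul_inv_cancel₀ hp.ne', one_smul] at this
      rw [hnorm, mul_inv_cancel₀ hp'.ne', one_smul] at this
      exact this
    ext j
    apply Complex.ext
    · exact congrArg (fun x => x j) hre
    · exact congrArg (fun x => x j) him
  · -- SurjOn
    rintro ⟨u, v⟩ ⟨hu1, hu2, hv2⟩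
    replace hu1 : ‖u‖ = 1 := hu1
    replace hu2 : ∀ j : Fin n, (j : ℕ) < l → u j = 0 := hu2
    replace hv2 : ∀ j : Fin n, l ≤ (j : ℕ) → v j = 0 := hv2
    set r := Real.sqrt (t + ‖v‖ ^ 2) with hrdef
    have htv : 0 < t + ‖v‖ ^ 2 := by positivity
    have hrpos' : 0 < r := Real.sqrt_pos.2 htv
    have hrsq : r ^ 2 = t + ‖v‖ ^ 2 := Real.sq_sqrt htv.le
    refine ⟨(WithLp.toLp 2 (fun j => (⟨r * u j, v j⟩ : ℂ)) : EuclideanSpace ℂ (Fin n)), ⟨⟨?_, ?_⟩, ?_⟩, ?_⟩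
    · intro j hj
      show r * u j = 0
      rw [hu2 j hj, mul_zero]
    · intro j hj
      exact hv2 j hj
    · -- q = t
      show (∑ j : Fin n, (⟨r * u j, v j⟩ : ℂ) ^ 2) = (t : ℂ)
      have hterm : ∀ j : Fin n, (⟨r * u j, v j⟩ : ℂ) ^ 2 = (((r * u j) ^ 2 - (v j) ^ 2 : ℝ) : ℂ) := by
        intro j
        rcases lt_or_ge (j : ℕ) l with hj | hj
        · rw [hu2 j hj]
          apply Complex.ext <;> simp [pow_two, Complex.mul_re, Complex.mul_im]
        · rw [hv2 j hj]
          apply Complex.ext <;> simp [pow_two, Complex.mul_re, Complex.mul_im]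
      rw [Finset.sum_congr rfl fun j _ => hterm j, ← Complex.ofReal_sum]
      norm_cast
      have : ∑ j : Fin n, ((r * u j) ^ 2 - (v j) ^ 2) = r ^ 2 * ∑ j, (u j) ^ 2 - ∑ j, (v j) ^ 2 := by
        rw [Finset.sum_sub_distrib, Finset.mul_sum]
        congr 1
        exact Finset.sum_congr rfl fun j _ => by ring
      rw [this, ← norm_sq_euc, ← norm_sq_euc, hu1, hrsq]
      ring
    · -- image equals (u, v)
      have hrev : reVec n (WithLp.toLp 2 (fun j => (⟨r * u j, v j⟩ : ℂ)) : EuclideanSpace ℂ (Fin n)) = r • u := by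
        ext j
        show r * u j = (r • u) j
        rfl
      have himv : imVec n (WithLp.toLp 2 (fun j => (⟨r * u j, v j⟩ : ℂ)) : EuclideanSpace ℂ (Fin n)) = v := rfl
      show ((‖reVec n _‖)⁻¹ • reVec n _, imVec n _) = (u, v)
      rw [hrev, himv]
      have hn : ‖r • u‖ = r := by
        rw [norm_smul, Real.norm_eq_abs, abs_of_pos hrpos', hu1, mul_one]
      rw [hn, smul_smul, inv_mul_cancel₀ hrpos'.ne', one_smul]
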